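/- Let λ, μ, α > 0 and let φ satisfy φ(T)/T → ∞ as T → ∞. Then for every x > 0, limsup_{T→∞} (1/(φ(T)·ln(φ(T)/T))) ln P(ξ_T(1) ≥ x) ≤ −x. -/

import Mathlib

open MeasureTheory ProbabilityTheory Filter Set
open scoped ENNReal Topology

noncomputable section

/-- Transition probabilities of the embedded Markov chain of the Poisson process with
uniform catastrophes: from `i ≥ 1`, go to `i+1` with probability `λ/(λ+μ)` and to each
`j < i` with probability `μ/(i(λ+μ))`; from `0`, go to `1` with probability `1`. -/
def transP (lam mu : ℝ) (i j : ℕ) : ℝ :=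
  if i = 0 then (if j = 1 then 1 else 0)
  else if j = i + 1 then lam / (lam + mu)
  else if j < i then mu / (i * (lam + mu))
  else 0

lemma path_le (lam mu : ℝ) : ∀ (n : ℕ) (p : ℕ → ℕ),
    ((if p 0 = 0 then (1:ℝ≥0∞) else 0) *
      ∏ l ∈ Finset.range n, ENNReal.ofReal (transP lam mu (p l) (p (l+1))) ≠ 0) → p n ≤ n := by
  intro n
  induction n with
  | zero =>
    intro p h
    by_cases h0 : p 0 = 0
    · omega
    · simp [h0] at h
  | succ n ih =>
    intro p h
    rw [Finset.prod_range_succ, ← mul_assoc] at h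
    rcases mul_ne_zero_iff.1 h with ⟨h1, h2⟩
    have hpn := ih p h1
    have ht : transP lam mu (p n) (p (n+1)) ≠ 0 := by
      intro hz; rw [hz] at h2; simp at h2
    unfold transP at ht
    split_ifs at ht with ha hb hc hd
    · omega
    · exact absurd rfl ht
    · omega
    · omega
    · exact absurd rfl ht

lemma ereal_mul_le {c b : ℝ} (hc : 0 < c) {a : EReal} (h : a ≤ (b : EReal)) :
    (c : EReal) * a ≤ ((c * b : ℝ) : EReal) := by
  induction a using EReal.rec with
  | bot => rw [EReal.coe_mul_bot_of_pos hc]; exact bot_le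
  | coe r =>
    rw [← EReal.coe_mul]
    exact EReal.coe_le_coe_iff.2 (mul_le_mul_of_nonneg_left (EReal.coe_le_coe_iff.1 h) hc.le)
  | top => exact absurd h (EReal.coe_lt_top b).not_ge

/-- `η` is (distributed as) the discrete-time Markov chain on `ℕ` started at `x` with
transition probabilities `transP lam mu`, under the probability measure `P`:
the finite-dimensional distributions are products of transition probabilities. -/
def IsMarkovChainFrom {Ω : Type*} [MeasurableSpace Ω] (P : Measure Ω)
    (lam mu : ℝ) (x : ℕ) (η : ℕ → Ω → ℕ) : Prop :=
  (∀ k, Measurable (η k)) ∧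
  ∀ (n : ℕ) (path : ℕ → ℕ),
    P {ω | ∀ l ≤ n, η l ω = path l} =
      (if path 0 = x then 1 else 0) *
        ∏ l ∈ Finset.range n, ENNReal.ofReal (transP lam mu (path l) (path (l + 1)))

/-- `ν` is a Poisson process of rate `α` under `P`: it starts at `0`, has monotone paths
on `[0,∞)`, independent increments, and each increment over `[s,t]` is Poisson
distributed with mean `α(t-s)`. -/
def IsPoissonProcess {Ω : Type*} [MeasurableSpace Ω] (P : Measure Ω)
    (α : ℝ) (ν : ℝ → Ω → ℕ) : Prop :=
  (∀ t, Measurable (ν t)) ∧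
  (∀ ω, ν 0 ω = 0) ∧
  (∀ ω, MonotoneOn (fun t => ν t ω) (Set.Ici (0 : ℝ))) ∧
  (∀ (n : ℕ) (t : ℕ → ℝ), 0 ≤ t 0 → Monotone t →
    iIndepFun
      (fun i : Fin n => fun ω => ν (t (i + 1)) ω - ν (t i) ω) P) ∧
  (∀ s t : ℝ, 0 ≤ s → s ≤ t → ∀ k : ℕ,
    P {ω | ν t ω - ν s ω = k} =
      ENNReal.ofReal (Real.exp (-(α * (t - s))) * (α * (t - s)) ^ k / (Nat.factorial k)))

lemma eta_le_ae {Ω : Type*} [MeasurableSpace Ω] (P : Measure Ω) (lam mu : ℝ)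
    (η : ℕ → Ω → ℕ) (hη : IsMarkovChainFrom P lam mu 0 η) :
    P {ω | ∃ n, n < η n ω} = 0 := by
  have hsub : {ω | ∃ n, n < η n ω} ⊆
      ⋃ (n : ℕ), ⋃ (v : {v : Fin (n+1) → ℕ // n < v (Fin.last n)}),
        {ω | ∀ l ≤ n, η l ω = (fun l => if h : l < n + 1 then v.1 ⟨l, h⟩ else 0) l} := by
    rintro ω ⟨n, hn⟩
    refine mem_iUnion.2 ⟨n, mem_iUnion.2 ⟨⟨fun i => η i ω, hn⟩, ?_⟩⟩
    intro l hl
    simp only [mem_setOf_eq]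
    rw [dif_pos (by omega)]
  refine measure_mono_null hsub (measure_iUnion_null fun n => measure_iUnion_null fun v => ?_)
  rw [hη.2 n (fun l => if h : l < n + 1 then v.1 ⟨l, h⟩ else 0)]
  by_contra hne
  have hle := path_le lam mu n (fun l => if h : l < n + 1 then v.1 ⟨l, h⟩ else 0) hne
  simp only [dif_pos (lt_add_one n)] at hle
  have := v.2
  simp only [Fin.last] at this
  omega

lemma poisson_tail {Ω : Type*} [MeasurableSpace Ω] (P : Measure Ω) (alpha : ℝ)
    (ν : ℝ → Ω → ℕ) (hν : IsPoissonProcess P alpha ν) (T : ℝ) (hT : 0 ≤ T)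
    (halpha : 0 ≤ alpha) (n : ℕ) :
    P {ω | n ≤ ν T ω} ≤ ENNReal.ofReal ((alpha * T) ^ n / n.factorial) := by
  obtain ⟨hmeas, h0, hmono, hindep, hpmf⟩ := hν
  set c := alpha * T with hc
  have hc0 : 0 ≤ c := by positivity
  have hpm : ∀ m : ℕ, P {ω | ν T ω = m} =
      ENNReal.ofReal (Real.exp (-c) * c ^ m / m.factorial) := by
    intro m
    have h := hpmf 0 T le_rfl hT m
    have hset : {ω | ν T ω - ν 0 ω = m} = {ω | ν T ω = m} := by
      ext ω; simp [h0 ω]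
    rw [hset] at h
    rw [h]
    norm_num [hc]
  have hsub : {ω | n ≤ ν T ω} ⊆ ⋃ k : ℕ, {ω | ν T ω = n + k} := by
    intro ω h
    simp only [mem_setOf_eq] at h
    exact mem_iUnion.2 ⟨ν T ω - n, by simp only [mem_setOf_eq]; omega⟩
  refine (measure_mono hsub).trans ((measure_iUnion_le _).trans ?_)
  have hterm : ∀ k : ℕ, Real.exp (-c) * c ^ (n + k) / (n + k).factorial ≤
      (Real.exp (-c) * (c ^ n / n.factorial)) * (c ^ k / k.factorial) := by
    intro k
    have h1 : ((n.factorial * k.factorial : ℕ) : ℝ) ≤ ((n + k).factorial : ℝ) :=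
      Nat.cast_le.2 (Nat.le_of_dvd (n + k).factorial_pos
        (Nat.factorial_mul_factorial_dvd_factorial_add n k))
    push_cast at h1
    calc Real.exp (-c) * c ^ (n + k) / (n + k).factorial
        = Real.exp (-c) * (c ^ n * c ^ k / (n + k).factorial) := by rw [pow_add]; ring
      _ ≤ Real.exp (-c) * (c ^ n * c ^ k / (n.factorial * k.factorial)) := by
          gcongr
      _ = (Real.exp (-c) * (c ^ n / n.factorial)) * (c ^ k / k.factorial) := by ring
  calc ∑' k : ℕ, P {ω | ν T ω = n + k}
      = ∑' k : ℕ, ENNReal.ofReal (Real.exp (-c) * c ^ (n + k) / (n + k).factorial) := by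
        exact tsum_congr fun k => hpm (n + k)
    _ ≤ ENNReal.ofReal (c ^ n / n.factorial) := by
        refine Summable.tsum_le_of_sum_le ENNReal.summable fun s => ?_
        rw [← ENNReal.ofReal_sum_of_nonneg (fun k _ => by positivity)]
        refine ENNReal.ofReal_le_ofReal ?_
        calc ∑ k ∈ s, Real.exp (-c) * c ^ (n + k) / (n + k).factorial
            ≤ ∑ k ∈ s, (Real.exp (-c) * (c ^ n / n.factorial)) * (c ^ k / k.factorial) :=
              Finset.sum_le_sum fun k _ => hterm k
          _ = (Real.exp (-c) * (c ^ n / n.factorial)) * ∑ k ∈ s, c ^ k / k.factorial := by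
              rw [Finset.mul_sum]
          _ ≤ (Real.exp (-c) * (c ^ n / n.factorial)) * Real.exp c := by
              gcongr
              calc ∑ k ∈ s, c ^ k / k.factorial
                  ≤ ∑ k ∈ Finset.range (s.sup id + 1), c ^ k / k.factorial := by
                    refine Finset.sum_le_sum_of_subset_of_nonneg ?_ (fun k _ _ => by positivity)
                    intro k hk
                    exact Finset.mem_range.2 (Nat.lt_succ_of_le (Finset.le_sup (f := id) hk))
                _ ≤ Real.exp c := Real.sum_le_exp_of_nonneg hc0 _
          _ = c ^ n / n.factorial := by
              rw [Real.exp_neg]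
              field_simp

/-- The processes `η` and `ν` are independent (as processes). -/
def IndepProc {Ω : Type*} [MeasurableSpace Ω] (P : Measure Ω)
    (η : ℕ → Ω → ℕ) (ν : ℝ → Ω → ℕ) : Prop :=
  IndepFun (fun ω => fun k => η k ω) (fun ω => fun t => ν t ω) P

/-- **Upper bound in the superlinear regime.** If `φ(T)/T → ∞`, then for every `x > 0`,
`limsup_{T→∞} (1/(φ(T) ln(φ(T)/T))) ln P(ξ(T)/φ(T) ≥ x) ≤ -x`. -/
theorem sldp_upper_bound_poisson_uniform_catastrophes
    {Ω : Type*} [MeasurableSpace Ω] (P : Measure Ω) [IsProbabilityMeasure P]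
    (lam mu alpha : ℝ) (hlam : 0 < lam) (hmu : 0 < mu) (halpha : 0 < alpha)
    (η : ℕ → Ω → ℕ) (ν : ℝ → Ω → ℕ)
    (hη : IsMarkovChainFrom P lam mu 0 η)
    (hν : IsPoissonProcess P alpha ν)
    (hind : IndepProc P η ν)
    (φ : ℝ → ℝ) (hφpos : ∀ T > (0 : ℝ), 0 < φ T)
    (hφ : Tendsto (fun T => φ T / T) atTop atTop)
    (x : ℝ) (hx : 0 < x) :
    Filter.limsup
        (fun T => (((φ T * Real.log (φ T / T))⁻¹ : ℝ) : EReal) *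
          ENNReal.log (P {ω | x ≤ (η (ν T ω) ω : ℝ) / φ T}))
        atTop
      ≤ ((-x : ℝ) : EReal) := by
  set c0 : ℝ := Real.log x - Real.log alpha - 1 with hc0def
  have hN : P {ω | ∃ k, k < η k ω} = 0 := eta_le_ae P lam mu η hη
  have hloglim : Tendsto (fun T => Real.log (φ T / T)) atTop atTop :=
    Real.tendsto_log_atTop.comp hφ
  have hev : ∀ᶠ T in atTop,
      (((φ T * Real.log (φ T / T))⁻¹ : ℝ) : EReal) *
          ENNReal.log (P {ω | x ≤ (η (ν T ω) ω : ℝ) / φ T})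
        ≤ (((-x) * (1 + c0 / Real.log (φ T / T)) : ℝ) : EReal) := by
    filter_upwards [eventually_ge_atTop (1 : ℝ),
      hloglim.eventually_ge_atTop (max 1 (1 + Real.log alpha - Real.log x))] with T hT hlog
    have hT0 : (0 : ℝ) < T := lt_of_lt_of_le one_pos hT
    have hφT : 0 < φ T := hφpos T hT0
    have hlψ1 : (1 : ℝ) ≤ Real.log (φ T / T) := le_trans (le_max_left _ _) hlog
    have hlψ0 : (0 : ℝ) < Real.log (φ T / T) := lt_of_lt_of_le one_pos hlψ1
    set lψ : ℝ := Real.log (φ T / T) with hlψdef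
    have hcpos : 0 < (φ T * lψ)⁻¹ := by positivity
    set n : ℕ := ⌈x * φ T⌉₊ with hndef
    have hxφn : x * φ T ≤ (n : ℝ) := Nat.le_ceil _
    have hn1 : 0 < n := Nat.ceil_pos.2 (by positivity)
    have hαT : 0 < alpha * T := by positivity
    -- measure bound
    have hPA : P {ω | x ≤ (η (ν T ω) ω : ℝ) / φ T} ≤
        ENNReal.ofReal ((alpha * T) ^ n / n.factorial) := by
      have hincl : {ω | x ≤ (η (ν T ω) ω : ℝ) / φ T} ∩ {ω | ∃ k, k < η k ω}ᶜ ⊆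
          {ω | n ≤ ν T ω} := by
        rintro ω ⟨h1, h2⟩
        simp only [mem_setOf_eq] at h1 ⊢
        simp only [mem_compl_iff, mem_setOf_eq, not_exists, not_lt] at h2
        have hη1 : x * φ T ≤ (η (ν T ω) ω : ℝ) := (le_div_iff₀ hφT).1 h1
        have hη2 : (η (ν T ω) ω : ℝ) ≤ (ν T ω : ℝ) := Nat.cast_le.2 (h2 (ν T ω))
        exact Nat.ceil_le.2 (le_trans hη1 hη2)
      calc P {ω | x ≤ (η (ν T ω) ω : ℝ) / φ T}
          ≤ P ({ω | x ≤ (η (ν T ω) ω : ℝ) / φ T} ∩ {ω | ∃ k, k < η k ω}ᶜ) +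
            P ({ω | x ≤ (η (ν T ω) ω : ℝ) / φ T} ∩ {ω | ∃ k, k < η k ω}) := by
            refine (measure_mono ?_).trans (measure_union_le _ _)
            intro ω hω
            by_cases hc : ω ∈ {ω | ∃ k, k < η k ω}
            · exact Or.inr ⟨hω, hc⟩
            · exact Or.inl ⟨hω, hc⟩
        _ ≤ P {ω | n ≤ ν T ω} + 0 :=
            add_le_add (measure_mono hincl)
              (le_of_eq (measure_mono_null inter_subset_right hN))
        _ = P {ω | n ≤ ν T ω} := add_zero _
        _ ≤ ENNReal.ofReal ((alpha * T) ^ n / n.factorial) :=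
            poisson_tail P alpha ν hν T hT0.le halpha.le n
    have hr : (0 : ℝ) < (alpha * T) ^ n / n.factorial := by positivity
    have hlog1 : ENNReal.log (P {ω | x ≤ (η (ν T ω) ω : ℝ) / φ T}) ≤
        ((Real.log ((alpha * T) ^ n / n.factorial) : ℝ) : EReal) := by
      calc ENNReal.log (P {ω | x ≤ (η (ν T ω) ω : ℝ) / φ T})
          ≤ ENNReal.log (ENNReal.ofReal ((alpha * T) ^ n / n.factorial)) :=
            ENNReal.log_monotone hPA
        _ = _ := ENNReal.log_ofReal_of_pos hr
    -- Stirling-type bound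
    have hfact : (n : ℝ) * Real.log n - n ≤ Real.log n.factorial := by
      have hnR : (0 : ℝ) < (n : ℝ) := by exact_mod_cast hn1
      have h2 : (n : ℝ) ^ n / n.factorial ≤ Real.exp n :=
        le_trans (Finset.single_le_sum (f := fun i => (n : ℝ) ^ i / i.factorial)
          (fun i _ => by positivity) (Finset.self_mem_range_succ n))
          (Real.sum_le_exp_of_nonneg (Nat.cast_nonneg n) (n + 1))
      rw [div_le_iff₀ (by positivity)] at h2
      have h3 := Real.log_le_log (by positivity) h2
      rw [Real.log_pow, Real.log_mul (Real.exp_ne_zero _) (by positivity),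
        Real.log_exp] at h3
      linarith
    have hbound : Real.log ((alpha * T) ^ n / n.factorial) ≤ -(x * φ T) * (lψ + c0) := by
      rw [Real.log_div (by positivity) (by positivity), Real.log_pow]
      have hLn : Real.log (x * φ T) ≤ Real.log n := Real.log_le_log (by positivity) hxφn
      have hL' : Real.log (x * φ T) - Real.log (alpha * T) - 1 = lψ + c0 := by
        rw [Real.log_mul hx.ne' hφT.ne', Real.log_mul halpha.ne' hT0.ne', hlψdef,
          Real.log_div hφT.ne' hT0.ne', hc0def]
        ring
      have hL'0 : 0 ≤ lψ + c0 := by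
        have := le_trans (le_max_right _ _) hlog
        rw [hc0def]
        linarith
      have hLn0 : lψ + c0 ≤ Real.log n - Real.log (alpha * T) - 1 := by
        rw [← hL']; linarith
      have hnn : (0 : ℝ) ≤ (n : ℝ) := Nat.cast_nonneg n
      nlinarith [mul_nonneg (sub_nonneg.2 hxφn) hL'0,
        mul_nonneg hnn (sub_nonneg.2 hLn0)]
    have hmul := ereal_mul_le hcpos (hlog1.trans (EReal.coe_le_coe_iff.2 hbound))
    refine hmul.trans (le_of_eq (EReal.coe_eq_coe_iff.2 ?_))
    field_simp
  refine le_trans (limsup_le_limsup hev) ?_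
  have hre : Tendsto (fun T => (-x) * (1 + c0 / Real.log (φ T / T))) atTop (𝓝 (-x)) := by
    have h1 : Tendsto (fun T => c0 / Real.log (φ T / T)) atTop (𝓝 0) :=
      Tendsto.div_atTop tendsto_const_nhds hloglim
    have h2 : Tendsto (fun T => 1 + c0 / Real.log (φ T / T)) atTop (𝓝 1) := by
      simpa using tendsto_const_nhds.add h1
    simpa using h2.const_mul (-x)
  exact le_of_eq (((continuous_coe_real_ereal.tendsto _).comp hre).limsup_eq)
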